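/- (Properties of pruning) Let L be any of the modal systems K_nD, D_nD, T_nD, K45_nD, KD45_nD, S5_nD, let P ⊆ 𝒫 be finite, and let δ ∈ D^P_k(L) with k ≥ l. Then: (1) δ ⊨ δ^{↓l} (over all Kripke models); (2) δ^{↓l} ∈ D^P_{k−l}(L); (3) δ^{↑l} ∈ D^P_l(L); (4) for every h ∈ ℕ and every γ ∈ D^P_{k+h}(L), γ^{↓h} = γ^{↑k} = (γ^{↓h})^{↑k}; (5) for all k₁, k₂ ∈ ℕ with l ≤ min{k, k₁, k₂}, (δ^{↑k₁})^{↑l} = (δ^{↑k₂})^{↑l}. -/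

import Mathlib

/-!
Common framework: multi-agent epistemic modal logic with distributed knowledge.
Agents are `Fin n`, atoms are natural numbers.
-/

namespace DKLogic

/-- Formulas of the language `L_D`: atoms, negation, conjunction, disjunction and the
distributed-knowledge modality `D_B` for nonempty sets `B` of agents (together with the
constants `⊤`/`⊥`, which the paper uses as the empty conjunction/disjunction). -/
inductive Formula (n : ℕ) : Type
  | top : Formula n
  | bot : Formula n
  | atom : ℕ → Formula n
  | neg : Formula n → Formula n
  | and : Formula n → Formula n → Formula n
  | or : Formula n → Formula n → Formula n
  | D : {B : Finset (Fin n) // B.Nonempty} → Formula n → Formula n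

namespace Formula

/-- Modal depth of a formula. -/
def depth {n : ℕ} : Formula n → ℕ
  | top => 0
  | bot => 0
  | atom _ => 0
  | neg φ => depth φ
  | and φ ψ => max (depth φ) (depth ψ)
  | or φ ψ => max (depth φ) (depth ψ)
  | D _ φ => depth φ + 1

/-- The atoms occurring in a formula. -/
def atoms {n : ℕ} : Formula n → Finset ℕ
  | top => ∅
  | bot => ∅
  | atom q => {q}
  | neg φ => atoms φ
  | and φ ψ => atoms φ ∪ atoms ψ
  | or φ ψ => atoms φ ∪ atoms ψ
  | D _ φ => atoms φ

end Formula

/-- A Kripke model over world type `W` with `n` agents. -/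
structure KModel (n : ℕ) (W : Type) where
  R : Fin n → W → W → Prop
  V : W → Set ℕ

/-- The distributed accessibility relation `R_B = ⋂_{i ∈ B} R_i`. -/
def KModel.RB {n : ℕ} {W : Type} (M : KModel n W) (B : Finset (Fin n)) (s t : W) : Prop :=
  ∀ i ∈ B, M.R i s t

/-- Satisfaction. -/
def Sat {n : ℕ} {W : Type} (M : KModel n W) : W → Formula n → Prop
  | _, .top => True
  | _, .bot => False
  | s, .atom q => q ∈ M.V s
  | s, .neg φ => ¬ Sat M s φ
  | s, .and φ ψ => Sat M s φ ∧ Sat M s ψ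
  | s, .or φ ψ => Sat M s φ ∨ Sat M s ψ
  | s, .D B φ => ∀ t : W, M.RB B.1 s t → Sat M t φ

/-- Seriality of a relation. -/
def Serial {W : Type} (R : W → W → Prop) : Prop := ∀ x, ∃ y, R x y

/-- Euclideanness of a relation. -/
def Euclidean {W : Type} (R : W → W → Prop) : Prop := ∀ x y z, R x y → R x z → R y z

/-- The six modal systems. -/
inductive MSys : Type
  | K | D | T | K45 | KD45 | S5

/-- `L`-models: frame conditions on each accessibility relation for each system. -/
def IsModel {n : ℕ} {W : Type} : MSys → KModel n W → Prop
  | .K, _ => True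
  | .D, M => ∀ i, Serial (M.R i)
  | .T, M => ∀ i, Reflexive (M.R i)
  | .K45, M => ∀ i, Transitive (M.R i) ∧ Euclidean (M.R i)
  | .KD45, M => ∀ i, Serial (M.R i) ∧ Transitive (M.R i) ∧ Euclidean (M.R i)
  | .S5, M => ∀ i, Reflexive (M.R i) ∧ Transitive (M.R i) ∧ Euclidean (M.R i)

/-- Semantic consequence over `L`-models. -/
def Entails {n : ℕ} (L : MSys) (φ ψ : Formula n) : Prop :=
  ∀ (W : Type) (M : KModel n W), IsModel L M → ∀ s : W, Sat M s φ → Sat M s ψ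

/-- Semantic equivalence over `L`-models. -/
def EquivL {n : ℕ} (L : MSys) (φ ψ : Formula n) : Prop :=
  Entails L φ ψ ∧ Entails L ψ φ

/-- `L`-satisfiability. -/
def SatL {n : ℕ} (L : MSys) (φ : Formula n) : Prop :=
  ∃ (W : Type) (M : KModel n W) (s : W), IsModel L M ∧ Sat M s φ

/-- Collective `p`-bisimulation between two pointed models. -/
def CollPBisim {n : ℕ} {W W' : Type} (M : KModel n W) (s : W) (M' : KModel n W') (s' : W')
    (p : ℕ) : Prop :=
  ∃ ρ : W → W' → Prop, ρ s s' ∧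
    ∀ u u', ρ u u' →
      ((∀ q : ℕ, q ≠ p → (q ∈ M.V u ↔ q ∈ M'.V u')) ∧
       (∀ B : Finset (Fin n), B.Nonempty → ∀ v, M.RB B u v → ∃ v', M'.RB B u' v' ∧ ρ v v') ∧
       (∀ B : Finset (Fin n), B.Nonempty → ∀ v', M'.RB B u' v' → ∃ v, M.RB B u v ∧ ρ v v'))

/-- `ψ` is a result of forgetting `p` in `φ` in system `L`
(written `dforget_L(φ,p) ≡_L ψ` in the paper). -/
def IsForget {n : ℕ} (L : MSys) (φ : Formula n) (p : ℕ) (ψ : Formula n) : Prop :=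
  ψ.atoms ⊆ φ.atoms.erase p ∧
  (∀ (W W' : Type) (M : KModel n W) (M' : KModel n W') (s : W) (s' : W'),
      IsModel L M → IsModel L M' → Sat M s φ → CollPBisim M s M' s' p → Sat M' s' ψ) ∧
  (∀ (W' : Type) (M' : KModel n W') (s' : W'),
      IsModel L M' → Sat M' s' ψ →
      ∃ (W : Type) (M : KModel n W) (s : W), IsModel L M ∧ Sat M s φ ∧ CollPBisim M s M' s' p)

/-- `L` is closed under forgetting: `dforget_L(φ,p)` exists (as an `L`-satisfiable formula)
for every `L`-satisfiable `φ` and every atom `p`. -/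
def ClosedUnderForgetting {n : ℕ} (L : MSys) : Prop :=
  ∀ (φ : Formula n) (p : ℕ), SatL L φ → ∃ ψ : Formula n, SatL L ψ ∧ IsForget L φ p ψ

/-- `ψ` is a uniform interpolant of `φ` in `L` over `P \ {p}`. -/
def IsUI {n : ℕ} (L : MSys) (P : Finset ℕ) (p : ℕ) (φ ψ : Formula n) : Prop :=
  SatL L ψ ∧ ψ.atoms ⊆ P.erase p ∧
  ∀ χ : Formula n, p ∉ χ.atoms → (Entails L φ χ ↔ Entails L ψ χ)

/-- The uniform interpolation property for the system `L`. -/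
def HasUIP {n : ℕ} (L : MSys) : Prop :=
  ∀ (P : Finset ℕ) (p : ℕ) (φ : Formula n),
    p ∈ P → φ.atoms ⊆ P → SatL L φ → ∃ ψ : Formula n, IsUI L P p φ ψ

/-! ### Canonical formulas -/

/-- Big conjunction of a list of formulas (`⊤` for the empty list). -/
def bigAnd {n : ℕ} : List (Formula n) → Formula n
  | [] => .top
  | φ :: l => .and φ (bigAnd l)

/-- Big disjunction of a list of formulas (`⊥` for the empty list). -/
def bigOr {n : ℕ} : List (Formula n) → Formula n
  | [] => .bot
  | φ :: l => .or φ (bigOr l)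

/-- An injective numerical code of formulas, used to fix a canonical ordering. -/
def fcode {n : ℕ} : Formula n → ℕ
  | .top => Nat.pair 0 0
  | .bot => Nat.pair 1 0
  | .atom q => Nat.pair 2 q
  | .neg φ => Nat.pair 3 (fcode φ)
  | .and φ ψ => Nat.pair 4 (Nat.pair (fcode φ) (fcode ψ))
  | .or φ ψ => Nat.pair 5 (Nat.pair (fcode φ) (fcode ψ))
  | .D B φ => Nat.pair 6 (Nat.pair (B.1.sum fun i => 2 ^ (i : ℕ)) (fcode φ))

/-- Insert a formula into a strictly `fcode`-sorted list (dropping duplicates). -/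
def insertF {n : ℕ} (φ : Formula n) : List (Formula n) → List (Formula n)
  | [] => [φ]
  | ψ :: l =>
      if fcode φ < fcode ψ then φ :: ψ :: l
      else if fcode φ = fcode ψ then ψ :: l
      else ψ :: insertF φ l

/-- The canonical (sorted, duplicate-free) list representing the set of formulas in `l`. -/
def normList {n : ℕ} (l : List (Formula n)) : List (Formula n) := l.foldr insertF []

/-- The minterm of `P` that is positive exactly on `S`. -/
def minterm {n : ℕ} (P S : Finset ℕ) : Formula n :=
  bigAnd ((P.sort (· ≤ ·)).map fun q =>
    if q ∈ S then Formula.atom q else Formula.neg (Formula.atom q))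

/-- The subset of `Fin n` whose characteristic bits are those of `m`. -/
def natToFinset (n m : ℕ) : Finset (Fin n) :=
  Finset.univ.filter fun i => m.testBit (i : ℕ)

/-- A canonical enumeration of all nonempty subsets of the agent set. -/
def neSubsets (n : ℕ) : List {B : Finset (Fin n) // B.Nonempty} :=
  ((List.range (2 ^ n)).map (natToFinset n)).filterMap fun B =>
    if h : B.Nonempty then some ⟨B, h⟩ else none

/-- `∇_B Φ = D_B (⋁Φ) ∧ ⋀_{φ ∈ Φ} ¬ D_B ¬ φ`. -/
def nabla {n : ℕ} (B : {B : Finset (Fin n) // B.Nonempty}) (Φ : List (Formula n)) : Formula n :=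
  Formula.and (Formula.D B (bigOr Φ))
    (bigAnd (Φ.map fun φ => Formula.neg (Formula.D B (Formula.neg φ))))

/-- Underlying data of a d-canonical formula: a set of (positive) atoms together with,
for every set `B` of agents, a list of successor data. -/
inductive CData (n : ℕ) : Type
  | mk (S : Finset ℕ) (succ : Finset (Fin n) → List (CData n)) : CData n

/-- The positive-atom component. -/
def CData.S {n : ℕ} : CData n → Finset ℕ
  | mk S _ => S

/-- The `B`-successor data. -/
def CData.succ {n : ℕ} : CData n → Finset (Fin n) → List (CData n)
  | mk _ f => f

/-- The d-canonical formula of depth `k` over `P` determined by the data `d`: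
`δ_0 ∧ ⋀_{B} ∇_B Φ_B`. -/
def toFormula {n : ℕ} (P : Finset ℕ) : ℕ → CData n → Formula n
  | 0, d => minterm P (d.S ∩ P)
  | (k+1), d =>
      Formula.and (minterm P (d.S ∩ P))
        (bigAnd ((neSubsets n).map fun B =>
          nabla B (normList ((d.succ B.1).map fun c => toFormula P k c))))

/-- `D^P_k`: the set of d-canonical formulas of depth `k` over `P`. -/
def DP {n : ℕ} (P : Finset ℕ) (k : ℕ) : Set (Formula n) := Set.range (toFormula P k)

/-- `R_B(δ)` for `δ` the level-`k` canonical formula with data `d`: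
the set of `B`-successor canonical formulas (of level `k - 1`). -/
def RBset {n : ℕ} (P : Finset ℕ) (k : ℕ) (d : CData n) (B : Finset (Fin n)) :
    Set (Formula n) :=
  {φ | ∃ c ∈ d.succ B, φ = toFormula P (k - 1) c}

/-- One pruning step `δ ↦ δ^↓` on data (first argument: the level of the input). -/
def downD {n : ℕ} : ℕ → CData n → CData n
  | 0, d => d
  | 1, d => CData.mk d.S (fun _ => [])
  | (k+2), d => CData.mk d.S (fun B => (d.succ B).map fun c => downD (k+1) c)

/-- `l`-fold pruning `δ ↦ δ^{↓l}` on data (first argument: the level of the input). -/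
def downIter {n : ℕ} : ℕ → ℕ → CData n → CData n
  | _, 0, d => d
  | k, (l+1), d => downIter (k-1) l (downD k d)

/-- Truncation `δ ↦ δ^{↑l}` on data (first argument: the level of the input). -/
def upD {n : ℕ} : ℕ → ℕ → CData n → CData n
  | _, 0, d => CData.mk d.S (fun _ => [])
  | 0, (_+1), d => d
  | (k+1), (l+1), d => CData.mk d.S (fun B => (d.succ B).map fun c => upD k l c)

/-- The canonical formula `δ` of level `k` with data `d`. -/
def cf {n : ℕ} (P : Finset ℕ) (k : ℕ) (d : CData n) : Formula n := toFormula P k d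

/-- `δ^{↓l}` (a canonical formula of level `k - l`). -/
def cfDown {n : ℕ} (P : Finset ℕ) (k l : ℕ) (d : CData n) : Formula n :=
  toFormula P (k - l) (downIter k l d)

/-- `δ^{↑l}` (a canonical formula of level `min k l`). -/
def cfUp {n : ℕ} (P : Finset ℕ) (k l : ℕ) (d : CData n) : Formula n :=
  toFormula P (min k l) (upD k l d)

/-- Literal elimination: `φ^p` replaces every occurrence of `¬p` by `⊤` and subsequently
every remaining occurrence of `p` by `⊤`. -/
def elim {n : ℕ} (p : ℕ) : Formula n → Formula n
  | .top => .top
  | .bot => .bot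
  | .atom q => if q = p then .top else .atom q
  | .neg (.atom q) => if q = p then .top else .neg (.atom q)
  | .neg φ => .neg (elim p φ)
  | .and φ ψ => .and (elim p φ) (elim p ψ)
  | .or φ ψ => .or (elim p φ) (elim p ψ)
  | .D B φ => .D B (elim p φ)

/-! ### Auxiliary lemmas -/

section Aux

variable {n : ℕ}

lemma fcode_injective : ∀ φ ψ : Formula n, fcode φ = fcode ψ → φ = ψ := by
  intro φ
  induction φ with
  | top => intro ψ h; cases ψ <;> simp only [fcode, Nat.pair_eq_pair] at h <;>
      first | omega | rfl
  | bot => intro ψ h; cases ψ <;> simp only [fcode, Nat.pair_eq_pair] at h <;>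
      first | omega | rfl
  | atom q => intro ψ h; cases ψ <;> simp only [fcode, Nat.pair_eq_pair] at h <;>
      first | omega | (rw [h.2])
  | neg φ ih => intro ψ h; cases ψ <;> simp only [fcode, Nat.pair_eq_pair] at h <;>
      first | omega | (rw [ih _ h.2])
  | and φ₁ φ₂ ih₁ ih₂ =>
    intro ψ h; cases ψ <;> simp only [fcode, Nat.pair_eq_pair] at h <;>
      first | omega | (rw [ih₁ _ h.2.1, ih₂ _ h.2.2])
  | or φ₁ φ₂ ih₁ ih₂ =>
    intro ψ h; cases ψ <;> simp only [fcode, Nat.pair_eq_pair] at h <;>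
      first | omega | (rw [ih₁ _ h.2.1, ih₂ _ h.2.2])
  | D B φ ih =>
    intro ψ h
    cases ψ with
    | D B' ψ =>
      simp only [fcode, Nat.pair_eq_pair] at h
      obtain ⟨-, h1, h2⟩ := h
      have hBB : B.1.image (Fin.val) = B'.1.image (Fin.val) := by
        apply Finset.geomSum_injective (le_refl 2)
        show ∑ i ∈ B.1.image Fin.val, 2 ^ i = ∑ i ∈ B'.1.image Fin.val, 2 ^ i
        rw [Finset.sum_image (fun x _ y _ hxy => Fin.val_injective hxy),
          Finset.sum_image (fun x _ y _ hxy => Fin.val_injective hxy)]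
        exact h1
      have hB : B = B' :=
        Subtype.ext (Finset.image_injective (Fin.val_injective) hBB)
      rw [hB, ih _ h2]
    | top => simp only [fcode, Nat.pair_eq_pair] at h; omega
    | bot => simp only [fcode, Nat.pair_eq_pair] at h; omega
    | atom q => simp only [fcode, Nat.pair_eq_pair] at h; omega
    | neg _ => simp only [fcode, Nat.pair_eq_pair] at h; omega
    | and _ _ => simp only [fcode, Nat.pair_eq_pair] at h; omega
    | or _ _ => simp only [fcode, Nat.pair_eq_pair] at h; omega

lemma mem_insertF {φ x : Formula n} {l : List (Formula n)} :
    x ∈ insertF φ l ↔ x = φ ∨ x ∈ l := by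
  induction l with
  | nil => simp [insertF]
  | cons ψ l ih =>
    simp only [insertF]
    split_ifs with h1 h2
    · simp [List.mem_cons]
    · have : φ = ψ := fcode_injective _ _ h2
      subst this
      simp only [List.mem_cons]
      tauto
    · simp only [List.mem_cons, ih]
      tauto

lemma mem_normList {x : Formula n} {l : List (Formula n)} :
    x ∈ normList l ↔ x ∈ l := by
  induction l with
  | nil => simp [normList]
  | cons φ l ih =>
    show x ∈ insertF φ (normList l) ↔ _
    simp only [mem_insertF, ih, List.mem_cons]

lemma sat_bigAnd {W : Type} {M : KModel n W} {s : W} {l : List (Formula n)} :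
    Sat M s (bigAnd l) ↔ ∀ φ ∈ l, Sat M s φ := by
  induction l with
  | nil => simp [bigAnd, Sat]
  | cons φ l ih => simp [bigAnd, Sat, ih]

lemma sat_bigOr {W : Type} {M : KModel n W} {s : W} {l : List (Formula n)} :
    Sat M s (bigOr l) ↔ ∃ φ ∈ l, Sat M s φ := by
  induction l with
  | nil => simp [bigOr, Sat]
  | cons φ l ih => simp [bigOr, Sat, ih]

lemma sat_nabla {W : Type} {M : KModel n W} {s : W} {B : {B : Finset (Fin n) // B.Nonempty}}
    {Φ : List (Formula n)} :
    Sat M s (nabla B Φ) ↔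
      ((∀ t, M.RB B.1 s t → ∃ φ ∈ Φ, Sat M t φ) ∧
       (∀ φ ∈ Φ, ∃ t, M.RB B.1 s t ∧ Sat M t φ)) := by
  constructor
  · rintro ⟨h1, h2⟩
    refine ⟨fun t ht => sat_bigOr.1 (h1 t ht), fun φ hφ => ?_⟩
    have hb : ¬ (∀ t, M.RB B.1 s t → ¬ Sat M t φ) :=
      sat_bigAnd.1 h2 _ (List.mem_map_of_mem hφ)
    by_contra hc
    push_neg at hc
    exact hb hc
  · rintro ⟨h1, h2⟩
    refine ⟨fun t ht => sat_bigOr.2 (h1 t ht), sat_bigAnd.2 ?_⟩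
    intro ψ hψ
    rw [List.mem_map] at hψ
    obtain ⟨φ, hφ, rfl⟩ := hψ
    obtain ⟨t, ht, hst⟩ := h2 φ hφ
    intro hc
    exact hc t ht hst

lemma nabla_mono {W : Type} {M : KModel n W} {s : W} {B : {B : Finset (Fin n) // B.Nonempty}}
    {α : Type} {f g : α → Formula n} {l : List α}
    (h : ∀ c ∈ l, ∀ t : W, Sat M t (f c) → Sat M t (g c)) :
    Sat M s (nabla B (normList (l.map f))) → Sat M s (nabla B (normList (l.map g))) := by
  rw [sat_nabla, sat_nabla]
  simp only [mem_normList, List.mem_map]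
  rintro ⟨h1, h2⟩
  constructor
  · intro t ht
    obtain ⟨φ, ⟨c, hc, rfl⟩, hsat⟩ := h1 t ht
    exact ⟨g c, ⟨c, hc, rfl⟩, h c hc t hsat⟩
  · rintro φ ⟨c, hc, rfl⟩
    obtain ⟨t, ht, hsat⟩ := h2 (f c) ⟨c, hc, rfl⟩
    exact ⟨t, ht, h c hc t hsat⟩

lemma sat_downD {W : Type} (P : Finset ℕ) (M : KModel n W) :
    ∀ (k : ℕ) (d : CData n) (s : W),
      Sat M s (toFormula P k d) → Sat M s (toFormula P (k - 1) (downD k d)) := by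
  intro k
  induction k with
  | zero => intro d s hs; exact hs
  | succ k ih =>
    cases k with
    | zero => intro d s hs; exact hs.1
    | succ m =>
      intro d s hs
      refine ⟨hs.1, ?_⟩
      have h2 := hs.2
      rw [sat_bigAnd] at h2 ⊢
      intro ψ hψ
      simp only [List.mem_map] at hψ
      obtain ⟨B, hB, rfl⟩ := hψ
      have hb := h2 _ (List.mem_map_of_mem hB)
      show Sat M s (nabla B (normList ((((downD (m + 2) d).succ B.1)).map
        (toFormula P (m + 1 - 1)))))
      have hsucc : (downD (m + 2) d).succ B.1 = (d.succ B.1).map (downD (m + 1)) := rfl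
      rw [hsucc, List.map_map]
      exact nabla_mono (fun c _ t hc => ih c t hc) hb

lemma sat_downIter {W : Type} (P : Finset ℕ) (M : KModel n W) :
    ∀ (l k : ℕ) (d : CData n) (s : W),
      Sat M s (toFormula P k d) → Sat M s (toFormula P (k - l) (downIter k l d)) := by
  intro l
  induction l with
  | zero => intro k d s hs; exact hs
  | succ l ih =>
    intro k d s hs
    have h1 := sat_downD P M k d s hs
    have h2 := ih (k - 1) (downD k d) s h1
    have hk : k - 1 - l = k - (l + 1) := by omega
    rw [hk] at h2
    exact h2

lemma sat_upD {W : Type} (P : Finset ℕ) (M : KModel n W) :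
    ∀ (l k : ℕ) (d : CData n) (s : W),
      Sat M s (toFormula P k d) → Sat M s (toFormula P (min k l) (upD k l d)) := by
  intro l
  induction l with
  | zero =>
    intro k d s hs
    rw [Nat.min_zero]
    cases k with
    | zero => exact hs
    | succ j => exact hs.1
  | succ l ih =>
    intro k d s hs
    cases k with
    | zero => exact hs
    | succ j =>
      rw [Nat.succ_min_succ]
      refine ⟨hs.1, ?_⟩
      have h2 := hs.2
      rw [sat_bigAnd] at h2 ⊢
      intro ψ hψ
      simp only [List.mem_map] at hψ
      obtain ⟨B, hB, rfl⟩ := hψ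
      have hb := h2 _ (List.mem_map_of_mem hB)
      show Sat M s (nabla B (normList (((upD (j + 1) (l + 1) d).succ B.1).map
        (toFormula P (min j l)))))
      have hsucc : (upD (j + 1) (l + 1) d).succ B.1 = (d.succ B.1).map (upD j l) := rfl
      rw [hsucc, List.map_map]
      exact nabla_mono (fun c _ t hc => ih j c t hc) hb

lemma S_downD (k : ℕ) (d : CData n) : (downD k d).S = d.S := by
  match k with
  | 0 => rfl
  | 1 => rfl
  | (k + 2) => rfl

lemma S_upD (m k : ℕ) (d : CData n) : (upD m k d).S = d.S := by
  cases m <;> cases k <;> rfl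

lemma toFormula_downD (P : Finset ℕ) :
    ∀ (k m : ℕ) (d : CData n), k < m → toFormula P k (downD m d) = toFormula P k d := by
  intro k
  induction k with
  | zero =>
    intro m d _
    show minterm P ((downD m d).S ∩ P) = minterm P (d.S ∩ P)
    rw [S_downD]
  | succ k ih =>
    intro m d hm
    match m, hm with
    | (j + 2), _ =>
      have hk : k < j + 1 := by omega
      have hper : ∀ B : {B : Finset (Fin n) // B.Nonempty},
          nabla B (normList (((downD (j + 2) d).succ B.1).map (toFormula P k)))
          = nabla B (normList ((d.succ B.1).map (toFormula P k))) := by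
        intro B
        have h1 : ((downD (j + 2) d).succ B.1).map (toFormula P k)
            = ((d.succ B.1).map (downD (j + 1))).map (toFormula P k) := rfl
        rw [h1, List.map_map]
        exact congrArg (fun L => nabla B (normList L))
          (List.map_congr_left (fun c _ => ih (j + 1) c hk))
      show Formula.and _ _ = Formula.and _ _
      refine congrArg₂ Formula.and rfl ?_
      exact congrArg bigAnd (List.map_congr_left (fun B _ => hper B))

lemma toFormula_downIter (P : Finset ℕ) :
    ∀ (l k m : ℕ) (d : CData n), k + l ≤ m →
      toFormula P k (downIter m l d) = toFormula P k d := by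
  intro l
  induction l with
  | zero => intro k m d _; rfl
  | succ l ih =>
    intro k m d h
    show toFormula P k (downIter (m - 1) l (downD m d)) = _
    rw [ih k (m - 1) (downD m d) (by omega), toFormula_downD P k m d (by omega)]

lemma toFormula_upD (P : Finset ℕ) :
    ∀ (k m k' : ℕ) (d : CData n), k ≤ m → k ≤ k' →
      toFormula P k (upD m k' d) = toFormula P k d := by
  intro k
  induction k with
  | zero =>
    intro m k' d _ _
    show minterm P ((upD m k' d).S ∩ P) = minterm P (d.S ∩ P)
    rw [S_upD]
  | succ k ih =>
    intro m k' d hm hk'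
    match m, k', hm, hk' with
    | (j + 1), (j' + 1), _, _ =>
      have hper : ∀ B : {B : Finset (Fin n) // B.Nonempty},
          nabla B (normList (((upD (j + 1) (j' + 1) d).succ B.1).map (toFormula P k)))
          = nabla B (normList ((d.succ B.1).map (toFormula P k))) := by
        intro B
        have h1 : ((upD (j + 1) (j' + 1) d).succ B.1).map (toFormula P k)
            = ((d.succ B.1).map (upD j j')).map (toFormula P k) := rfl
        rw [h1, List.map_map]
        exact congrArg (fun L => nabla B (normList L))
          (List.map_congr_left (fun c _ => ih j j' c (by omega) (by omega)))
      show Formula.and _ _ = Formula.and _ _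
      refine congrArg₂ Formula.and rfl ?_
      exact congrArg bigAnd (List.map_congr_left (fun B _ => hper B))

end Aux


/-- properties of pruning. -/
theorem pruning_properties {n : ℕ} (L : MSys) (P : Finset ℕ) (k l : ℕ) (hkl : l ≤ k)
    (d : CData n) (hsat : SatL L (cf P k d)) :
    -- (1) δ ⊨ δ^{↓l} over all Kripke models
    Entails MSys.K (cf P k d) (cfDown P k l d) ∧
    -- (2) δ^{↓l} ∈ D^P_{k−l}(L)
    (cfDown P k l d ∈ DP P (k - l) ∧ SatL L (cfDown P k l d)) ∧
    -- (3) δ^{↑l} ∈ D^P_l(L)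
    (cfUp P k l d ∈ DP P l ∧ SatL L (cfUp P k l d)) ∧
    -- (4) for γ ∈ D^P_{k+h}(L): γ^{↓h} = γ^{↑k} = (γ^{↓h})^{↑k}
    (∀ (h : ℕ) (e : CData n), SatL L (cf P (k + h) e) →
      cfDown P (k + h) h e = cfUp P (k + h) k e ∧
      cfUp P (k + h) k e = cfUp P k k (downIter (k + h) h e)) ∧
    -- (5) (δ^{↑k₁})^{↑l} = (δ^{↑k₂})^{↑l} whenever l ≤ min {k, k₁, k₂}
    (∀ k₁ k₂ : ℕ, l ≤ k₁ → l ≤ k₂ →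
      cfUp P (min k k₁) l (upD k k₁ d) = cfUp P (min k k₂) l (upD k k₂ d)) := by
  refine ⟨?_, ⟨?_, ?_⟩, ⟨?_, ?_⟩, ?_, ?_⟩
  · -- (1)
    intro W M _ s hs
    exact sat_downIter P M l k d s hs
  · -- (2) membership
    exact ⟨downIter k l d, rfl⟩
  · -- (2) satisfiability
    obtain ⟨W, M, s, hM, hs⟩ := hsat
    exact ⟨W, M, s, hM, sat_downIter P M l k d s hs⟩
  · -- (3) membership
    show toFormula P (min k l) (upD k l d) ∈ DP P l
    rw [min_eq_right hkl]
    exact ⟨upD k l d, rfl⟩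
  · -- (3) satisfiability
    obtain ⟨W, M, s, hM, hs⟩ := hsat
    exact ⟨W, M, s, hM, sat_upD P M l k d s hs⟩
  · -- (4)
    intro h e _
    have e1 : cfDown P (k + h) h e = toFormula P k e := by
      show toFormula P (k + h - h) (downIter (k + h) h e) = _
      rw [Nat.add_sub_cancel]
      exact toFormula_downIter P h k (k + h) e le_rfl
    have e2 : cfUp P (k + h) k e = toFormula P k e := by
      show toFormula P (min (k + h) k) (upD (k + h) k e) = _
      rw [min_eq_right (Nat.le_add_right k h)]
      exact toFormula_upD P k (k + h) k e (Nat.le_add_right k h) le_rfl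
    have e3 : cfUp P k k (downIter (k + h) h e) = toFormula P k e := by
      show toFormula P (min k k) (upD k k (downIter (k + h) h e)) = _
      rw [min_self]
      rw [toFormula_upD P k k k _ le_rfl le_rfl]
      exact toFormula_downIter P h k (k + h) e le_rfl
    exact ⟨e1.trans e2.symm, e2.trans e3.symm⟩
  · -- (5)
    intro k₁ k₂ h1 h2
    have key : ∀ m : ℕ, l ≤ m →
        cfUp P (min k m) l (upD k m d) = toFormula P l d := by
      intro m hm
      show toFormula P (min (min k m) l) (upD (min k m) l (upD k m d)) = _
      rw [min_eq_right (le_min hkl hm)]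
      rw [toFormula_upD P l (min k m) l _ (le_min hkl hm) le_rfl]
      exact toFormula_upD P l k m d hkl hm
    rw [key k₁ h1, key k₂ h2]

end DKLogic
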